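/- For all σ ≥ -1/2, β > 0 and λ ≥ 0, ∑_{k≥1} (λ - (k+σ)√β)_+ ≤ λ²/(2√β) - (1+2σ)λ/2 + (1+2σ)²√β/8. -/

import Mathlib

lemma key_aux (a : ℝ) : ∑' k : ℕ, max (a - (k : ℝ) - 1/2) 0 ≤ a ^ 2 / 2 := by
  set n := ⌈a - 1/2⌉₊ with hn
  have hz : ∀ k ∉ Finset.range n, max (a - (k : ℝ) - 1/2) 0 = 0 := by
    intro k hk
    rw [Finset.mem_range, not_lt] at hk
    have h1 : ¬ ((k : ℝ) < a - 1/2) := by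
      rw [← Nat.lt_ceil]; omega
    exact max_eq_right (by push_neg at h1; linarith)
  rw [tsum_eq_sum hz]
  have heq : ∑ k ∈ Finset.range n, max (a - (k : ℝ) - 1/2) 0
      = ∑ k ∈ Finset.range n, (a - (k : ℝ) - 1/2) := by
    apply Finset.sum_congr rfl
    intro k hk
    rw [Finset.mem_range] at hk
    have := Nat.lt_ceil.mp hk
    exact max_eq_left (by linarith)
  rw [heq]
  have hsum : ∑ k ∈ Finset.range n, ((k : ℝ)) = n * (n - 1) / 2 := by
    induction n with
    | zero => simp
    | succ m ih =>
      rw [Finset.sum_range_succ, ih]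
      push_cast
      ring
  rw [Finset.sum_sub_distrib, Finset.sum_sub_distrib, hsum]
  simp only [Finset.sum_const, Finset.card_range, nsmul_eq_mul]
  nlinarith [sq_nonneg (a - (n : ℝ))]

theorem stmt_2 (σ β lam : ℝ) (hσ : σ ≥ -1/2) (hβ : 0 < β) (hlam : 0 ≤ lam) :
    ∑' k : ℕ, max (lam - ((k : ℝ) + 1 + σ) * Real.sqrt β) 0
      ≤ lam ^ 2 / (2 * Real.sqrt β) - (1 + 2 * σ) * lam / 2 + (1 + 2 * σ) ^ 2 * Real.sqrt β / 8 := by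
  set s := Real.sqrt β with hs
  have hspos : 0 < s := Real.sqrt_pos.mpr hβ
  set a : ℝ := lam / s - σ - 1/2 with ha
  have hterm : ∀ k : ℕ, max (lam - ((k : ℝ) + 1 + σ) * s) 0 = s * max (a - (k : ℝ) - 1/2) 0 := by
    intro k
    rw [mul_max_of_nonneg _ _ hspos.le, mul_zero]
    congr 1
    rw [ha]
    field_simp [ha]
    ring
  calc ∑' k : ℕ, max (lam - ((k : ℝ) + 1 + σ) * s) 0
      = s * ∑' k : ℕ, max (a - (k : ℝ) - 1/2) 0 := by
        rw [← tsum_mul_left]; exact tsum_congr hterm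
    _ ≤ s * (a ^ 2 / 2) := by
        exact mul_le_mul_of_nonneg_left (key_aux a) hspos.le
    _ = lam ^ 2 / (2 * s) - (1 + 2 * σ) * lam / 2 + (1 + 2 * σ) ^ 2 * s / 8 := by
        rw [ha]
        field_simp [ha]
        ring
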